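/- The Antimirov automaton accepts the denoted language: for every regular expression E over α, the NFA M with state type `RegularExpression α`, transition function M.step q a = ∂ₐ(q), set of initial states M.start = {E}, and accepting states M.accept = { q | q is nullable }, satisfies M.accepts = matches E. -/

import Mathlib

open RegularExpression

open scoped Classical in
/-- The finite set of *derived terms* of a regular expression. -/
noncomputable def derivedTerms {α : Type*} :
    RegularExpression α → Finset (RegularExpression α)
  | zero => ∅
  | epsilon => ∅
  | char _ => {1}
  | plus P Q => derivedTerms P ∪ derivedTerms Q
  | comp P Q => (derivedTerms P).image (fun K => K * Q) ∪ derivedTerms Q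
  | RegularExpression.star P => (derivedTerms P).image (fun K => K * RegularExpression.star P)

/-- The *literal length* of a regular expression: the number of occurrences
of letters of the alphabet in it. -/
def litLength {α : Type*} : RegularExpression α → ℕ
  | zero => 0
  | epsilon => 0
  | char _ => 1
  | plus P Q => litLength P + litLength Q
  | comp P Q => litLength P + litLength Q
  | RegularExpression.star P => litLength P

open scoped Classical in
/-- The finite set of *Antimirov partial derivatives* of a regular expression
with respect to a letter `a`. -/
noncomputable def aderiv {α : Type*} (a : α) :
    RegularExpression α → Finset (RegularExpression α)
  | zero => ∅
  | epsilon => ∅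
  | char b => if b = a then {1} else ∅
  | plus P Q => aderiv a P ∪ aderiv a Q
  | comp P Q =>
      if [] ∈ P.matches' then (aderiv a P).image (fun K => K * Q) ∪ aderiv a Q
      else (aderiv a P).image (fun K => K * Q)
  | RegularExpression.star P => (aderiv a P).image (fun K => K * RegularExpression.star P)

/-- The Antimirov automaton accepts the denoted language: the NFA with states
the regular expressions, transitions `∂ₐ`, initial state `E` and accepting
states the nullable expressions accepts exactly `matches E`. -/
lemma aderiv_correct {α : Type*} [DecidableEq α] (a : α) (E : RegularExpression α) (w : List α) :
    (∃ K ∈ aderiv a E, w ∈ K.matches') ↔ w ∈ (RegularExpression.deriv E a).matches' := by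
  classical
  induction E generalizing w with
  | zero => simp [aderiv, RegularExpression.deriv]
  | epsilon => simp [aderiv, RegularExpression.deriv]
  | char b =>
    rcases eq_or_ne b a with h | h
    · subst h; simp [aderiv, deriv_char_self]
    · simp [aderiv, h, deriv_char_of_ne h]
  | plus P Q ihP ihQ =>
    simp only [aderiv, RegularExpression.deriv_add, Finset.mem_union, matches'_add]
    constructor
    · rintro ⟨K, hK | hK, hw⟩
      · exact Or.inl ((ihP w).1 ⟨K, hK, hw⟩)
      · exact Or.inr ((ihQ w).1 ⟨K, hK, hw⟩)
    · rintro (h | h)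
      · obtain ⟨K, hK, hw⟩ := (ihP w).2 h
        exact ⟨K, Or.inl hK, hw⟩
      · obtain ⟨K, hK, hw⟩ := (ihQ w).2 h
        exact ⟨K, Or.inr hK, hw⟩
  | comp P Q ihP ihQ =>
    have key : ∀ v : List α, (∃ K ∈ (aderiv a P).image (fun K => K * Q), v ∈ K.matches')
        ↔ v ∈ ((RegularExpression.deriv P a) * Q).matches' := by
      intro v
      simp only [Finset.mem_image, matches'_mul, Language.mem_mul]
      constructor
      · rintro ⟨_, ⟨K, hK, rfl⟩, hv⟩
        rw [matches'_mul, Language.mem_mul] at hv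
        obtain ⟨u, hu, x, hx, rfl⟩ := hv
        exact ⟨u, (ihP u).1 ⟨K, hK, hu⟩, x, hx, rfl⟩
      · rintro ⟨u, hu, x, hx, rfl⟩
        obtain ⟨K, hK, huK⟩ := (ihP u).2 hu
        exact ⟨K * Q, ⟨K, hK, rfl⟩, by
          rw [matches'_mul]; exact Language.append_mem_mul huK hx⟩
    have hmE : P.matchEpsilon = true ↔ [] ∈ P.matches' := by
      rw [← rmatch_iff_matches']; rfl
    by_cases hP : [] ∈ P.matches'
    · have : P.matchEpsilon = true := hmE.2 hP
      simp only [RegularExpression.deriv, this, if_true, aderiv, hP, if_true, Finset.mem_union,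
        matches'_add]
      constructor
      · rintro ⟨K, hK | hK, hw⟩
        · exact Or.inl ((key w).1 ⟨K, hK, hw⟩)
        · exact Or.inr ((ihQ w).1 ⟨K, hK, hw⟩)
      · rintro (h | h)
        · obtain ⟨K, hK, hw⟩ := (key w).2 h
          exact ⟨K, Or.inl hK, hw⟩
        · obtain ⟨K, hK, hw⟩ := (ihQ w).2 h
          exact ⟨K, Or.inr hK, hw⟩
    · have : P.matchEpsilon = false := by
        rcases Bool.eq_false_or_eq_true P.matchEpsilon with h | h
        · exact absurd (hmE.1 h) hP
        · exact h
      simp only [RegularExpression.deriv, this, if_false, aderiv, hP, if_false, Bool.false_eq_true]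
      exact key w
  | star P ihP =>
    simp only [aderiv, RegularExpression.deriv_star, Finset.mem_image, matches'_mul, Language.mem_mul]
    constructor
    · rintro ⟨_, ⟨K, hK, rfl⟩, hv⟩
      rw [matches'_mul, Language.mem_mul] at hv
      obtain ⟨u, hu, x, hx, rfl⟩ := hv
      exact ⟨u, (ihP u).1 ⟨K, hK, hu⟩, x, hx, rfl⟩
    · rintro ⟨u, hu, x, hx, rfl⟩
      obtain ⟨K, hK, huK⟩ := (ihP u).2 hu
      exact ⟨K * P.star, ⟨K, hK, rfl⟩, by
        rw [matches'_mul]; exact Language.append_mem_mul huK hx⟩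

lemma cons_mem_matches_iff {α : Type*} [DecidableEq α] (a : α) (E : RegularExpression α) (w : List α) :
    a :: w ∈ E.matches' ↔ ∃ K ∈ aderiv a E, w ∈ K.matches' := by
  rw [aderiv_correct, ← rmatch_iff_matches', ← rmatch_iff_matches']
  rfl

theorem antimirov_nfa_accepts {α : Type*} [DecidableEq α]
    (E : RegularExpression α) :
    (⟨fun q a => ↑(aderiv a q), {E}, { q | [] ∈ q.matches' }⟩ :
        NFA α (RegularExpression α)).accepts = E.matches' := by
  set M : NFA α (RegularExpression α) :=
    ⟨fun q a => ↑(aderiv a q), {E}, { q | [] ∈ q.matches' }⟩ with hM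
  have key : ∀ (w : List α) (S : Set (RegularExpression α)),
      (∃ q ∈ M.evalFrom S w, [] ∈ q.matches') ↔ ∃ F ∈ S, w ∈ F.matches' := by
    intro w
    induction w with
    | nil => intro S; simp [NFA.evalFrom_nil]
    | cons a w ih =>
      intro S
      rw [show M.evalFrom S (a :: w) = M.evalFrom (M.stepSet S a) w from rfl, ih]
      constructor
      · rintro ⟨q, hq, hw⟩
        rw [M.mem_stepSet] at hq
        obtain ⟨t, ht, hqt⟩ := hq
        exact ⟨t, ht, (cons_mem_matches_iff a t w).2 ⟨q, hqt, hw⟩⟩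
      · rintro ⟨F, hF, hw⟩
        obtain ⟨K, hK, hKw⟩ := (cons_mem_matches_iff a F w).1 hw
        exact ⟨K, M.mem_stepSet.2 ⟨F, hF, hK⟩, hKw⟩
  ext w
  rw [NFA.mem_accepts]
  constructor
  · rintro ⟨q, hq, hw⟩
    obtain ⟨F, hF, hFw⟩ := (key w M.start).1 ⟨q, hw, hq⟩
    rw [show M.start = {E} from rfl, Set.mem_singleton_iff] at hF
    subst hF
    exact hFw
  · intro hw
    obtain ⟨q, hq, hq'⟩ := (key w M.start).2 ⟨E, rfl, hw⟩
    exact ⟨q, hq', hq⟩
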